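/- arXiv:1406.6736 — 3 statements merged into one kernel-verified Lean document; each statement's English description precedes it below -/
import Mathlib

section
/- Every diameter-k-critical graph on n vertices has at most 3n²/k edges. -/
open scoped Classical

/-- A graph is diameter-`k`-critical if it has diameter `k` and deleting any edge strictly
increases the diameter. -/
def IsDiamKCritical {V : Type*} (G : SimpleGraph V) (k : ℕ) : Prop :=
  G.ediam = k ∧ ∀ e ∈ G.edgeSet, (k : ℕ∞) < (G.deleteEdges {e}).ediam

namespace DiamCritAux

open SimpleGraph Finset

variable {V : Type*}

/-- `e` is a good edge for the vertex `a` if deleting `e` strictly increases the distance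
from `a` to some vertex `b` (equivalently, every `a`-`b` geodesic uses `e`). -/
def Good (G : SimpleGraph V) (a : V) (e : Sym2 V) : Prop :=
  ∃ b, G.edist a b < (G.deleteEdges {e}).edist a b


lemma exists_coe {x : ℕ∞} (h : x ≠ ⊤) : ∃ m : ℕ, (m : ℕ∞) = x :=
  ⟨x.toNat, ENat.coe_toNat h⟩

lemma edist_delete_le_of_not_mem {G : SimpleGraph V} {u v : V}
    (W : G.Walk u v) {e : Sym2 V} (he : e ∉ W.edges) :
    (G.deleteEdges {e}).edist u v ≤ W.length := by
  have := SimpleGraph.edist_le (W.toDeleteEdge e he)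
  rwa [show (W.toDeleteEdge e he).length = W.length from Walk.length_transfer _ _] at this

lemma geodesic_split {G : SimpleGraph V} {u v : V} {W : G.Walk u v}
    (hlen : (W.length : ℕ∞) = G.edist u v) {a : V} (ha : a ∈ W.support) :
    ((W.takeUntil a ha).length : ℕ∞) = G.edist u a ∧
    ((W.dropUntil a ha).length : ℕ∞) = G.edist a v := by
  have hsum : (W.takeUntil a ha).length + (W.dropUntil a ha).length = W.length := by
    have h := congrArg Walk.length (W.take_spec ha)
    rwa [Walk.length_append] at h
  have h1 : G.edist u a ≤ ((W.takeUntil a ha).length : ℕ∞) := SimpleGraph.edist_le _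
  have h2 : G.edist a v ≤ ((W.dropUntil a ha).length : ℕ∞) := SimpleGraph.edist_le _
  have hne1 : G.edist u a ≠ ⊤ := (lt_of_le_of_lt h1 (ENat.coe_lt_top _)).ne
  have hne2 : G.edist a v ≠ ⊤ := (lt_of_le_of_lt h2 (ENat.coe_lt_top _)).ne
  obtain ⟨m1, hm1⟩ := exists_coe hne1
  obtain ⟨m2, hm2⟩ := exists_coe hne2
  have htri : G.edist u v ≤ G.edist u a + G.edist a v := SimpleGraph.edist_triangle
  rw [← hlen, ← hm1, ← hm2] at htri
  rw [← hm1] at h1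
  rw [← hm2] at h2
  have htri' : W.length ≤ m1 + m2 := by exact_mod_cast htri
  have h1' : m1 ≤ (W.takeUntil a ha).length := by exact_mod_cast h1
  have h2' : m2 ≤ (W.dropUntil a ha).length := by exact_mod_cast h2
  constructor
  · rw [← hm1]; congr 1; omega
  · rw [← hm2]; congr 1; omega

lemma dart_fst_ne_end {G : SimpleGraph V} {u v : V} {W : G.Walk u v}
    (hW : W.IsPath) {d : G.Dart} (hd : d ∈ W.darts) : d.toProd.1 ≠ v := by
  induction W with
  | nil => simp at hd
  | @cons a b c hadj W ih =>
    rw [Walk.darts_cons, List.mem_cons] at hd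
    rcases hd with rfl | hd
    · intro h
      have h2 := (Walk.cons_isPath_iff _ _).mp hW
      exact h2.2 (h ▸ W.end_mem_support)
    · exact ih hW.of_cons hd

lemma dart_snd_ne_start {G : SimpleGraph V} {u v : V} {W : G.Walk u v}
    (hW : W.IsPath) {d : G.Dart} (hd : d ∈ W.darts) : d.toProd.2 ≠ u := by
  cases W with
  | nil => simp at hd
  | @cons a b c hadj W =>
    rw [Walk.darts_cons, List.mem_cons] at hd
    have h2 := (Walk.cons_isPath_iff _ _).mp hW
    rcases hd with rfl | hd
    · exact hadj.ne'
    · intro h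
      exact h2.2 (h ▸ W.dart_snd_mem_support_of_mem_darts hd)

lemma dart_snd_inj {G : SimpleGraph V} {u v : V} {W : G.Walk u v}
    (hW : W.IsPath) {d d' : G.Dart} (hd : d ∈ W.darts) (hd' : d' ∈ W.darts)
    (h2 : d.toProd.2 = d'.toProd.2) : d = d' := by
  induction W with
  | nil => simp at hd
  | @cons a b c hadj W ih =>
    rw [Walk.darts_cons, List.mem_cons] at hd hd'
    rcases hd with rfl | hd
    · rcases hd' with rfl | hd'
      · rfl
      · exact absurd h2.symm (dart_snd_ne_start hW.of_cons hd')
    · rcases hd' with rfl | hd'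
      · exact absurd h2 (dart_snd_ne_start hW.of_cons hd)
      · exact ih hW.of_cons hd hd'

lemma edist_snd_end_le {G : SimpleGraph V} {u v : V} {W : G.Walk u v}
    (hW : W.IsPath) {d : G.Dart} (hd : d ∈ W.darts) (hfst : d.toProd.1 = u) :
    G.edist d.toProd.2 v + 1 ≤ (W.length : ℕ∞) := by
  induction W with
  | nil => simp at hd
  | @cons a b c hadj W ih =>
    rw [Walk.darts_cons, List.mem_cons] at hd
    rcases hd with rfl | hd
    · have : G.edist b c ≤ (W.length : ℕ∞) := SimpleGraph.edist_le _
      calc G.edist b c + 1 ≤ (W.length : ℕ∞) + 1 := by exact add_le_add_left this 1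
        _ = ((Walk.cons hadj W).length : ℕ∞) := by
            rw [Walk.length_cons]; push_cast; ring
    · exfalso
      have h2 := (Walk.cons_isPath_iff _ _).mp hW
      exact h2.2 (hfst ▸ W.dart_fst_mem_support_of_mem_darts hd)

lemma edist_dart_succ {G : SimpleGraph V} {u v : V} {W : G.Walk u v}
    (hW : W.IsPath) (hlen : (W.length : ℕ∞) = G.edist u v) {d : G.Dart}
    (hd : d ∈ W.darts) :
    G.edist u d.toProd.2 = G.edist u d.toProd.1 + 1 := by
  have hx : d.toProd.1 ∈ W.support := W.dart_fst_mem_support_of_mem_darts hd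
  obtain ⟨h1, h2⟩ := geodesic_split hlen hx
  have hd' : d ∈ ((W.takeUntil _ hx).append (W.dropUntil _ hx)).darts := by
    rw [W.take_spec hx]; exact hd
  rw [Walk.darts_append, List.mem_append] at hd'
  rcases hd' with hd' | hd'
  · exact absurd rfl (dart_fst_ne_end (hW.takeUntil hx) hd')
  -- d is in the dropUntil part, whose start is d.toProd.1
  have hkey : G.edist d.toProd.2 v + 1 ≤ ((W.dropUntil _ hx).length : ℕ∞) :=
    edist_snd_end_le (hW.dropUntil hx) hd' rfl
  set t₁ := (W.takeUntil _ hx).length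
  -- upper bound
  have hub : G.edist u d.toProd.2 ≤ (t₁ : ℕ∞) + 1 := by
    calc G.edist u d.toProd.2 ≤ G.edist u d.toProd.1 + G.edist d.toProd.1 d.toProd.2 :=
          SimpleGraph.edist_triangle
      _ ≤ (t₁ : ℕ∞) + 1 := by
          rw [← h1]
          exact add_le_add_right (le_of_eq (edist_eq_one_iff_adj.mpr d.adj)) _
  -- lower bound
  have hfin : G.edist u d.toProd.2 ≠ ⊤ := (lt_of_le_of_lt hub (by
    exact lt_of_le_of_lt le_rfl (by exact_mod_cast ENat.coe_lt_top (t₁ + 1)))).ne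
  obtain ⟨m, hm⟩ := exists_coe hfin
  obtain ⟨m2, hm2⟩ : ∃ m2 : ℕ, (m2 : ℕ∞) = G.edist d.toProd.2 v := by
    refine exists_coe ?_
    intro htop
    rw [htop] at hkey
    simp at hkey
  have hsum : t₁ + (W.dropUntil _ hx).length = W.length := by
    have h := congrArg Walk.length (W.take_spec hx)
    rwa [Walk.length_append] at h
  have hlb : t₁ + 1 ≤ m := by
    by_contra hcon
    push_neg at hcon
    have htri : G.edist u v ≤ G.edist u d.toProd.2 + G.edist d.toProd.2 v :=
      SimpleGraph.edist_triangle
    rw [← hlen, ← hm, ← hm2] at htri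
    have htri' : W.length ≤ m + m2 := by exact_mod_cast htri
    have hkey' : m2 + 1 ≤ (W.dropUntil _ hx).length := by
      rw [← hm2] at hkey
      exact_mod_cast hkey
    omega
  have hub' : m ≤ t₁ + 1 := by
    rw [← hm] at hub
    exact_mod_cast hub
  rw [← hm, ← h1]
  have : m = t₁ + 1 := le_antisymm hub' hlb
  rw [this]
  push_cast
  ring

lemma good_elim {G : SimpleGraph V} {a : V} {e : Sym2 V} (hg : Good G a e) :
    ∃ (b : V) (W : G.Walk a b) (d : G.Dart),
      W.IsPath ∧ ((W.length : ℕ∞) = G.edist a b) ∧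
      G.edist a b < (G.deleteEdges {e}).edist a b ∧
      d ∈ W.darts ∧ d.edge = e ∧
      G.edist a d.toProd.2 = G.edist a d.toProd.1 + 1 ∧
      G.edist a d.toProd.1 ≠ ⊤ := by
  obtain ⟨b, hb⟩ := hg
  have hne : G.edist a b ≠ ⊤ := (lt_of_lt_of_le hb le_top).ne
  obtain ⟨W₀, hW₀⟩ := SimpleGraph.exists_walk_of_edist_ne_top hne
  set W := W₀.bypass with hWdef
  have hWp : W.IsPath := W₀.bypass_isPath
  have hlen : (W.length : ℕ∞) = G.edist a b := by
    refine le_antisymm ?_ (SimpleGraph.edist_le _)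
    rw [← hW₀]
    exact_mod_cast W₀.length_bypass_le
  have he : e ∈ W.edges := by
    by_contra hce
    have := edist_delete_le_of_not_mem W hce
    rw [hlen] at this
    exact absurd hb (not_lt.mpr this)
  obtain ⟨d, hd, hde⟩ := List.mem_map.mp he
  have hpos := edist_dart_succ hWp hlen hd
  refine ⟨b, W, d, hWp, hlen, hb, hd, hde, hpos, ?_⟩
  -- finiteness of edist a d.1
  have hx : d.toProd.1 ∈ W.support := W.dart_fst_mem_support_of_mem_darts hd
  have h1 := (geodesic_split hlen hx).1
  rw [← h1]
  exact ENat.coe_ne_top _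

/-- The far endpoint selector. -/
noncomputable def far (G : SimpleGraph V) (a : V) (e : Sym2 V) : V :=
  if h : ∃ z, ∃ x, e = s(x, z) ∧ G.edist a z = G.edist a x + 1 ∧ G.edist a x ≠ ⊤
  then h.choose else a

lemma far_eq {G : SimpleGraph V} {a : V} {e : Sym2 V} {d : G.Dart}
    (hde : d.edge = e)
    (hpos : G.edist a d.toProd.2 = G.edist a d.toProd.1 + 1)
    (hfin : G.edist a d.toProd.1 ≠ ⊤) :
    far G a e = d.toProd.2 := by
  have hex : ∃ z, ∃ x, e = s(x, z) ∧ G.edist a z = G.edist a x + 1 ∧ G.edist a x ≠ ⊤ :=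
    ⟨d.toProd.2, d.toProd.1, by rw [← hde]; rfl, hpos, hfin⟩
  rw [far, dif_pos hex]
  obtain ⟨x, hxz, hzx, hxf⟩ := hex.choose_spec
  have heq : s(x, hex.choose) = s(d.toProd.1, d.toProd.2) := by
    rw [← hxz, ← hde]; rfl
  rw [Sym2.eq_iff] at heq
  rcases heq with ⟨h1, h2⟩ | ⟨h1, h2⟩
  · exact h2
  · exfalso
    -- h1 : x = d.toProd.2, h2 : hex.choose = d.toProd.1
    rw [h1] at hzx
    rw [h2] at hzx
    -- hzx : edist a d.1 = edist a d.2 + 1; hpos : edist a d.2 = edist a d.1 + 1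
    obtain ⟨m, hm⟩ := exists_coe hfin
    rw [hpos, ← hm] at hzx
    have h' : (m : ℕ∞) = ((m + 1 + 1 : ℕ) : ℕ∞) := by
      rw [hzx]; push_cast; ring
    have : m = m + 1 + 1 := by exact_mod_cast h'
    omega

lemma row_bound [Fintype V] (G : SimpleGraph V) [Fintype G.edgeSet] (a : V) :
    (G.edgeFinset.filter (fun e => Good G a e)).card ≤ Fintype.card V := by
  classical
  rw [← Finset.card_univ]
  apply Finset.card_le_card_of_injOn (far G a) (fun _ _ => Finset.mem_univ _)
  intro e₁ he₁ e₂ he₂ hfe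
  by_contra hne
  rw [Finset.mem_coe, Finset.mem_filter] at he₁ he₂
  obtain ⟨b₁, W₁, d₁, hW₁p, hlen₁, hwit₁, hd₁, hde₁, hpos₁, hfin₁⟩ := good_elim he₁.2
  obtain ⟨b₂, W₂, d₂, hW₂p, hlen₂, hwit₂, hd₂, hde₂, hpos₂, hfin₂⟩ := good_elim he₂.2
  have hf₁ : far G a e₁ = d₁.toProd.2 := far_eq hde₁ hpos₁ hfin₁
  have hf₂ : far G a e₂ = d₂.toProd.2 := far_eq hde₂ hpos₂ hfin₂
  have hz2 : d₂.toProd.2 = d₁.toProd.2 := by rw [← hf₂, ← hfe, hf₁]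
  have hz1 : d₁.toProd.2 ∈ W₁.support := W₁.dart_snd_mem_support_of_mem_darts hd₁
  have hzin2 : d₁.toProd.2 ∈ W₂.support := by
    rw [← hz2]; exact W₂.dart_snd_mem_support_of_mem_darts hd₂
  have hA : ((W₂.takeUntil d₁.toProd.2 hzin2).length : ℕ∞) = G.edist a d₁.toProd.2 :=
    (geodesic_split hlen₂ hzin2).1
  have hsplit₁ := geodesic_split hlen₁ hz1
  have hB : ((W₁.dropUntil d₁.toProd.2 hz1).length : ℕ∞) = G.edist d₁.toProd.2 b₁ := hsplit₁.2
  have htake₁ : ((W₁.takeUntil d₁.toProd.2 hz1).length : ℕ∞) = G.edist a d₁.toProd.2 :=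
    hsplit₁.1
  -- length of A ++ B equals edist a b₁
  have hlenAB : (((W₂.takeUntil d₁.toProd.2 hzin2).append
      (W₁.dropUntil d₁.toProd.2 hz1)).length : ℕ∞) = G.edist a b₁ := by
    rw [Walk.length_append]
    have h1 : (W₂.takeUntil d₁.toProd.2 hzin2).length = (W₁.takeUntil d₁.toProd.2 hz1).length := by
      have := htake₁ ▸ hA
      exact_mod_cast this
    rw [h1]
    have hsum : (W₁.takeUntil d₁.toProd.2 hz1).length
        + (W₁.dropUntil d₁.toProd.2 hz1).length = W₁.length := by
      have h := congrArg Walk.length (W₁.take_spec hz1)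
      rwa [Walk.length_append] at h
    rw [hsum]
    exact hlen₁
  -- e₁ ∉ A.edges
  have heA : e₁ ∉ (W₂.takeUntil d₁.toProd.2 hzin2).edges := by
    intro hmem
    obtain ⟨d₃, hd₃, hd₃e⟩ := List.mem_map.mp hmem
    have hd₃W : d₃ ∈ W₂.darts := W₂.darts_takeUntil_subset hzin2 hd₃
    have heq : s(d₃.toProd.1, d₃.toProd.2) = s(d₁.toProd.1, d₁.toProd.2) := by
      have h : d₃.edge = d₁.edge := by rw [hd₃e, hde₁]
      exact h
    rw [Sym2.eq_iff] at heq
    rcases heq with ⟨h1, h2⟩ | ⟨h1, h2⟩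
    · -- d₃.snd = d₁.snd = d₂.snd, so d₃ = d₂, so e₁ = e₂
      have hdd : d₃ = d₂ := dart_snd_inj hW₂p hd₃W hd₂ (by rw [h2, ← hz2])
      exact hne (by rw [← hd₃e, hdd, hde₂])
    · -- d₃.fst = d₁.snd is the endpoint of A, contradiction
      exact dart_fst_ne_end (hW₂p.takeUntil hzin2) hd₃ h1
  -- e₁ ∉ B.edges
  have heB : e₁ ∉ (W₁.dropUntil d₁.toProd.2 hz1).edges := by
    intro hmem
    obtain ⟨d₄, hd₄, hd₄e⟩ := List.mem_map.mp hmem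
    have hd₄W : d₄ ∈ W₁.darts := W₁.darts_dropUntil_subset hz1 hd₄
    have heq : s(d₄.toProd.1, d₄.toProd.2) = s(d₁.toProd.1, d₁.toProd.2) := by
      have h : d₄.edge = d₁.edge := by rw [hd₄e, hde₁]
      exact h
    rw [Sym2.eq_iff] at heq
    rcases heq with ⟨h1, h2⟩ | ⟨h1, h2⟩
    · -- d₄.snd = d₁.snd so d₄ = d₁; but then d₁ ∈ B.darts with snd = start of B
      have hdd : d₄ = d₁ := dart_snd_inj hW₁p hd₄W hd₁ h2
      rw [hdd] at hd₄
      exact dart_snd_ne_start (hW₁p.dropUntil hz1) hd₄ rfl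
    · -- d₄ traverses (d₁.snd, d₁.fst): then edist a d₁.fst = edist a d₁.snd + 1, contradiction
      have hp4 := edist_dart_succ hW₁p hlen₁ hd₄W
      rw [h1, h2] at hp4
      -- hp4 : edist a d₁.fst = edist a d₁.snd + 1; hpos₁ : edist a d₁.snd = edist a d₁.fst + 1
      obtain ⟨m, hm⟩ := exists_coe hfin₁
      rw [hpos₁, ← hm] at hp4
      have h' : (m : ℕ∞) = ((m + 1 + 1 : ℕ) : ℕ∞) := by
        rw [hp4]; push_cast; ring
      have hmm : m = m + 1 + 1 := by exact_mod_cast h'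
      omega
  -- assemble the contradiction
  have hCe : e₁ ∉ ((W₂.takeUntil d₁.toProd.2 hzin2).append
      (W₁.dropUntil d₁.toProd.2 hz1)).edges := by
    rw [Walk.edges_append, List.mem_append]
    push_neg
    exact ⟨heA, heB⟩
  have hfin := edist_delete_le_of_not_mem _ hCe
  rw [hlenAB] at hfin
  exact absurd hwit₁ (not_lt.mpr hfin)

lemma good_near {G : SimpleGraph V} {e : Sym2 V} {p q a : V} {k L s : ℕ}
    (hpq : (k : ℕ∞) < (G.deleteEdges {e}).edist p q)
    (hL : G.edist p q ≤ (L : ℕ∞))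
    (hs : (G.deleteEdges {e}).edist p a ≤ (s : ℕ∞))
    (hks : 2 * s + L ≤ k) :
    Good G a e := by
  by_contra hng
  rw [Good] at hng
  push_neg at hng
  have h1 : (G.deleteEdges {e}).edist a q ≤ G.edist a q := not_lt.mp (not_lt.mpr (hng q))
  have h3 : G.edist a p ≤ (G.deleteEdges {e}).edist a p :=
    SimpleGraph.edist_anti (SimpleGraph.deleteEdges_le _)
  have h4 : (G.deleteEdges {e}).edist a p ≤ (s : ℕ∞) := by
    rwa [SimpleGraph.edist_comm] at hs
  have h2 : G.edist a q ≤ (s : ℕ∞) + (L : ℕ∞) := by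
    calc G.edist a q ≤ G.edist a p + G.edist p q := SimpleGraph.edist_triangle
      _ ≤ (s : ℕ∞) + (L : ℕ∞) := add_le_add (h3.trans h4) hL
  have hfinal : (G.deleteEdges {e}).edist p q ≤ (k : ℕ∞) := by
    calc (G.deleteEdges {e}).edist p q
        ≤ (G.deleteEdges {e}).edist p a + (G.deleteEdges {e}).edist a q :=
          SimpleGraph.edist_triangle
      _ ≤ (s : ℕ∞) + ((s : ℕ∞) + (L : ℕ∞)) := add_le_add hs (h1.trans h2)
      _ = ((2 * s + L : ℕ) : ℕ∞) := by push_cast; ring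
      _ ≤ (k : ℕ∞) := by exact_mod_cast hks
  exact absurd hpq (not_lt.mpr hfinal)

lemma getVert_edist_le {G : SimpleGraph V} {u v : V} (W : G.Walk u v) {s : ℕ}
    (hs : s ≤ W.length) :
    G.edist u (W.getVert s) ≤ (s : ℕ∞) ∧
    G.edist (W.getVert s) v ≤ ((W.length - s : ℕ) : ℕ∞) := by
  induction W generalizing s with
  | nil =>
    have : s = 0 := by simpa using hs
    subst this
    simp [SimpleGraph.edist_self]
  | @cons a b c hadj W ih =>
    cases s with
    | zero =>
      constructor
      · simp [SimpleGraph.edist_self, Walk.getVert_zero]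
      · rw [Walk.getVert_zero]
        have := SimpleGraph.edist_le (Walk.cons hadj W)
        simpa using this
    | succ s =>
      have hs' : s ≤ W.length := by
        rw [Walk.length_cons] at hs; omega
      obtain ⟨ih1, ih2⟩ := ih hs'
      rw [Walk.getVert_cons_succ]
      constructor
      · calc G.edist a (W.getVert s) ≤ G.edist a b + G.edist b (W.getVert s) :=
            SimpleGraph.edist_triangle
          _ ≤ 1 + (s : ℕ∞) := add_le_add (le_of_eq (edist_eq_one_iff_adj.mpr hadj)) ih1
          _ = ((s + 1 : ℕ) : ℕ∞) := by push_cast; ring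
      · have : (Walk.cons hadj W).length - (s + 1) = W.length - s := by
          rw [Walk.length_cons]; omega
        rw [this]
        exact ih2

lemma getVert_edist_eq {G : SimpleGraph V} {u v : V} {W : G.Walk u v}
    (hlen : (W.length : ℕ∞) = G.edist u v) {s : ℕ} (hs : s ≤ W.length) :
    G.edist u (W.getVert s) = (s : ℕ∞) ∧
    G.edist (W.getVert s) v = ((W.length - s : ℕ) : ℕ∞) := by
  obtain ⟨h1, h2⟩ := getVert_edist_le W hs
  obtain ⟨m1, hm1⟩ := exists_coe (lt_of_le_of_lt h1 (ENat.coe_lt_top _)).ne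
  obtain ⟨m2, hm2⟩ := exists_coe (lt_of_le_of_lt h2 (ENat.coe_lt_top _)).ne
  have htri : G.edist u v ≤ G.edist u (W.getVert s) + G.edist (W.getVert s) v :=
    SimpleGraph.edist_triangle
  rw [← hlen, ← hm1, ← hm2] at htri
  have htri' : W.length ≤ m1 + m2 := by exact_mod_cast htri
  rw [← hm1] at h1
  rw [← hm2] at h2
  have h1' : m1 ≤ s := by exact_mod_cast h1
  have h2' : m2 ≤ W.length - s := by exact_mod_cast h2
  constructor
  · rw [← hm1]; congr 1; omega
  · rw [← hm2]; congr 1; omega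

lemma card_ge [Fintype V] {G : SimpleGraph V} {k : ℕ} (hk : 1 ≤ k)
    (hdiam : G.ediam = k) : k + 1 ≤ Fintype.card V := by
  have hex : ∃ u v, ((k - 1 : ℕ) : ℕ∞) < G.edist u v := by
    by_contra hc
    push_neg at hc
    have : G.ediam ≤ ((k - 1 : ℕ) : ℕ∞) := SimpleGraph.ediam_le_of_edist_le fun u v => hc u v
    rw [hdiam] at this
    have : k ≤ k - 1 := by exact_mod_cast this
    omega
  obtain ⟨u, v, huv⟩ := hex
  have hle : G.edist u v ≤ (k : ℕ∞) := hdiam ▸ SimpleGraph.edist_le_ediam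
  obtain ⟨m, hm⟩ := exists_coe (lt_of_le_of_lt hle (ENat.coe_lt_top _)).ne
  rw [← hm] at huv hle
  have hm1 : k - 1 < m := by exact_mod_cast huv
  have hm2 : m ≤ k := by exact_mod_cast hle
  have hmk : m = k := by omega
  obtain ⟨W₀, hW₀⟩ := SimpleGraph.exists_walk_of_edist_ne_top (by rw [← hm]; exact ENat.coe_ne_top _)
  set W := W₀.bypass with hWdef
  have hWp : W.IsPath := W₀.bypass_isPath
  have hWlen : W.length = k := by
    have hle1 : (W.length : ℕ∞) ≤ (m : ℕ∞) := by
      rw [hm, ← hW₀]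
      exact_mod_cast W₀.length_bypass_le
    have hle2 : (m : ℕ∞) ≤ (W.length : ℕ∞) := by
      rw [hm]
      exact SimpleGraph.edist_le _
    have : W.length = m := by
      have h1 : W.length ≤ m := by exact_mod_cast hle1
      have h2 : m ≤ W.length := by exact_mod_cast hle2
      omega
    omega
  have hnodup : W.support.Nodup := hWp.support_nodup
  have hlen : W.support.length = k + 1 := by
    rw [Walk.length_support, hWlen]
  calc k + 1 = W.support.length := hlen.symm
    _ ≤ Fintype.card V := hnodup.length_le_card

lemma col_bound [Fintype V] {G : SimpleGraph V} {k : ℕ} (hk : 2 ≤ k)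
    (hG : IsDiamKCritical G k) {e : Sym2 V} (he : e ∈ G.edgeSet) :
    k + 2 ≤ 2 * (Finset.univ.filter (fun a => Good G a e)).card := by
  classical
  have hdiam : ∀ u v : V, G.edist u v ≤ (k : ℕ∞) := by
    intro u v
    rw [← hG.1]
    exact SimpleGraph.edist_le_ediam
  have hcrit := hG.2 e he
  have hexist : ∃ p q, (k : ℕ∞) < (G.deleteEdges {e}).edist p q := by
    by_contra hc
    push_neg at hc
    exact absurd (SimpleGraph.ediam_le_of_edist_le fun u v => hc u v) (not_le.mpr hcrit)
  obtain ⟨p, q, hpq⟩ := hexist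
  -- L := G.dist p q
  obtain ⟨L, hL⟩ := exists_coe
    (lt_of_le_of_lt (hdiam p q) (ENat.coe_lt_top _)).ne
  have hLk : L ≤ k := by
    have := hdiam p q
    rw [← hL] at this
    exact_mod_cast this
  by_cases hcase : k ≤ 2 * L
  · -- use the support of a G-geodesic from p to q
    obtain ⟨W₀, hW₀⟩ := SimpleGraph.exists_walk_of_edist_ne_top
      (by rw [← hL]; exact ENat.coe_ne_top _)
    set W := W₀.bypass with hWdef
    have hWp : W.IsPath := W₀.bypass_isPath
    have hlen : (W.length : ℕ∞) = G.edist p q := by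
      refine le_antisymm ?_ (SimpleGraph.edist_le _)
      rw [← hW₀]
      exact_mod_cast W₀.length_bypass_le
    have hWlen : W.length = L := by
      have : (W.length : ℕ∞) = (L : ℕ∞) := by rw [hlen, ← hL]
      exact_mod_cast this
    have hgood : ∀ a ∈ W.support, Good G a e := by
      intro a ha
      have hE : e ∈ W.edges := by
        by_contra hce
        have h := edist_delete_le_of_not_mem W hce
        have : (G.deleteEdges {e}).edist p q ≤ (k : ℕ∞) := by
          refine h.trans ?_
          exact_mod_cast (by omega : W.length ≤ k)
        exact absurd hpq (not_lt.mpr this)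
      have hnd : ((W.takeUntil a ha).edges ++ (W.dropUntil a ha).edges).Nodup := by
        rw [← Walk.edges_append, W.take_spec ha]
        exact hWp.edges_nodup
      have hsum : (W.takeUntil a ha).length + (W.dropUntil a ha).length = W.length := by
        have h := congrArg Walk.length (W.take_spec ha)
        rwa [Walk.length_append] at h
      have hEsplit : e ∈ (W.takeUntil a ha).edges ∨ e ∈ (W.dropUntil a ha).edges := by
        have : e ∈ ((W.takeUntil a ha).append (W.dropUntil a ha)).edges := by
          rw [W.take_spec ha]; exact hE
        rw [Walk.edges_append, List.mem_append] at this
        exact this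
      rcases hEsplit with hE1 | hE2
      · -- e is in the first part: the second part avoids e; witness is p
        have hnotin : e ∉ (W.dropUntil a ha).edges :=
          fun h => (List.disjoint_of_nodup_append hnd) hE1 h
        have hHaq : (G.deleteEdges {e}).edist a q ≤ ((W.dropUntil a ha).length : ℕ∞) :=
          edist_delete_le_of_not_mem _ hnotin
        by_contra hng
        rw [Good] at hng
        push_neg at hng
        have h1 : (G.deleteEdges {e}).edist a p ≤ G.edist a p := not_lt.mp (not_lt.mpr (hng p))
        have h2 : G.edist a p ≤ ((W.takeUntil a ha).length : ℕ∞) := by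
          rw [SimpleGraph.edist_comm]
          exact SimpleGraph.edist_le _
        have : (G.deleteEdges {e}).edist p q ≤ (k : ℕ∞) := by
          calc (G.deleteEdges {e}).edist p q
              ≤ (G.deleteEdges {e}).edist p a + (G.deleteEdges {e}).edist a q :=
                SimpleGraph.edist_triangle
            _ ≤ ((W.takeUntil a ha).length : ℕ∞) + ((W.dropUntil a ha).length : ℕ∞) := by
                refine add_le_add ?_ hHaq
                rw [SimpleGraph.edist_comm]
                exact h1.trans h2
            _ = (W.length : ℕ∞) := by exact_mod_cast congrArg (Nat.cast : ℕ → ℕ∞) hsum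
            _ ≤ (k : ℕ∞) := by exact_mod_cast (by omega : W.length ≤ k)
        exact absurd hpq (not_lt.mpr this)
      · -- e is in the second part: the first part avoids e; witness is q
        have hnotin : e ∉ (W.takeUntil a ha).edges :=
          fun h => (List.disjoint_of_nodup_append hnd) h hE2
        have hHpa : (G.deleteEdges {e}).edist p a ≤ ((W.takeUntil a ha).length : ℕ∞) :=
          edist_delete_le_of_not_mem _ hnotin
        by_contra hng
        rw [Good] at hng
        push_neg at hng
        have h1 : (G.deleteEdges {e}).edist a q ≤ G.edist a q := not_lt.mp (not_lt.mpr (hng q))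
        have h2 : G.edist a q ≤ ((W.dropUntil a ha).length : ℕ∞) := SimpleGraph.edist_le _
        have : (G.deleteEdges {e}).edist p q ≤ (k : ℕ∞) := by
          calc (G.deleteEdges {e}).edist p q
              ≤ (G.deleteEdges {e}).edist p a + (G.deleteEdges {e}).edist a q :=
                SimpleGraph.edist_triangle
            _ ≤ ((W.takeUntil a ha).length : ℕ∞) + ((W.dropUntil a ha).length : ℕ∞) :=
                add_le_add hHpa (h1.trans h2)
            _ = (W.length : ℕ∞) := by exact_mod_cast congrArg (Nat.cast : ℕ → ℕ∞) hsum
            _ ≤ (k : ℕ∞) := by exact_mod_cast (by omega : W.length ≤ k)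
        exact absurd hpq (not_lt.mpr this)
    -- count
    have hsub : W.support.toFinset ⊆ Finset.univ.filter (fun a => Good G a e) := by
      intro a ha
      rw [List.mem_toFinset] at ha
      rw [Finset.mem_filter]
      exact ⟨Finset.mem_univ _, hgood a ha⟩
    have hcard : W.support.toFinset.card = L + 1 := by
      rw [List.toFinset_card_of_nodup hWp.support_nodup, Walk.length_support, hWlen]
    have := Finset.card_le_card hsub
    rw [hcard] at this
    omega
  · -- 2L < k
    push_neg at hcase
    by_cases htop : (G.deleteEdges {e}).edist p q = ⊤
    · -- every vertex is good
      have hall : ∀ a : V, Good G a e := by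
        intro a
        by_contra hng
        rw [Good] at hng
        push_neg at hng
        have h1 : (G.deleteEdges {e}).edist a p ≤ G.edist a p := not_lt.mp (not_lt.mpr (hng p))
        have h2 : (G.deleteEdges {e}).edist a q ≤ G.edist a q := not_lt.mp (not_lt.mpr (hng q))
        have : (G.deleteEdges {e}).edist p q ≤ ((k + k : ℕ) : ℕ∞) := by
          calc (G.deleteEdges {e}).edist p q
              ≤ (G.deleteEdges {e}).edist p a + (G.deleteEdges {e}).edist a q :=
                SimpleGraph.edist_triangle
            _ ≤ (k : ℕ∞) + (k : ℕ∞) := by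
                refine add_le_add ?_ (h2.trans (hdiam a q))
                rw [SimpleGraph.edist_comm]
                exact h1.trans (hdiam a p)
            _ = ((k + k : ℕ) : ℕ∞) := by push_cast; ring
        rw [htop] at this
        exact ENat.coe_ne_top (k + k) (top_le_iff.mp this)
      have hfull : Finset.univ.filter (fun a => Good G a e) = Finset.univ := by
        apply Finset.filter_true_of_mem
        intro a _
        exact hall a
      rw [hfull, Finset.card_univ]
      have := card_ge (by omega : 1 ≤ k) hG.1
      omega
    · -- finite case: use a geodesic in the deleted graph
      obtain ⟨D, hD⟩ := exists_coe htop
      have hkD : k < D := by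
        rw [← hD] at hpq
        exact_mod_cast hpq
      obtain ⟨W₀, hW₀⟩ := SimpleGraph.exists_walk_of_edist_ne_top htop
      set W := W₀.bypass with hWdef
      have hWp : W.IsPath := W₀.bypass_isPath
      have hlen : (W.length : ℕ∞) = (G.deleteEdges {e}).edist p q := by
        refine le_antisymm ?_ (SimpleGraph.edist_le _)
        rw [← hW₀]
        exact_mod_cast W₀.length_bypass_le
      have hWlen : W.length = D := by
        have : (W.length : ℕ∞) = (D : ℕ∞) := by rw [hlen, ← hD]
        exact_mod_cast this
      obtain ⟨r, hrdef⟩ : ∃ r, r = (k - L) / 2 := ⟨_, rfl⟩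
      have hr1 : 2 * r ≤ k - L := by omega
      have hr2 : k - L ≤ 2 * r + 1 := by omega
      have hrD : r + 1 ≤ D := by omega
      -- the two families
      have hσ : ∀ s : ℕ, s ≤ r →
          (G.deleteEdges {e}).edist p (W.getVert s) = (s : ℕ∞) := by
        intro s hs
        exact (getVert_edist_eq hlen (by omega : s ≤ W.length)).1
      have hτ : ∀ s : ℕ, s ≤ r →
          (G.deleteEdges {e}).edist (W.getVert (D - s)) q = (s : ℕ∞) := by
        intro s hs
        have h := (getVert_edist_eq hlen (by omega : D - s ≤ W.length)).2
        rw [hWlen] at h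
        rw [h]
        congr 1
        omega
      have hgoodσ : ∀ s : ℕ, s ≤ r → Good G (W.getVert s) e := by
        intro s hs
        refine good_near hpq (le_of_eq hL.symm) (le_of_eq (hσ s hs)) ?_
        omega
      have hgoodτ : ∀ s : ℕ, s ≤ r → Good G (W.getVert (D - s)) e := by
        intro s hs
        have hpq' : (k : ℕ∞) < (G.deleteEdges {e}).edist q p := by
          rwa [SimpleGraph.edist_comm]
        have hL' : G.edist q p ≤ (L : ℕ∞) := by
          rw [SimpleGraph.edist_comm]
          exact le_of_eq hL.symm
        have hs' : (G.deleteEdges {e}).edist q (W.getVert (D - s)) ≤ (s : ℕ∞) := by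
          rw [SimpleGraph.edist_comm]
          exact le_of_eq (hτ s hs)
        exact good_near hpq' hL' hs' (by omega)
      set S₁ := (Finset.range (r + 1)).image (fun s => W.getVert s) with hS₁def
      set S₂ := (Finset.range (r + 1)).image (fun s => W.getVert (D - s)) with hS₂def
      have hc₁ : S₁.card = r + 1 := by
        rw [hS₁def, Finset.card_image_of_injOn, Finset.card_range]
        intro s hs t ht hst
        rw [Finset.mem_coe, Finset.mem_range] at hs ht
        have h1 := hσ s (by omega)
        have h2 := hσ t (by omega)
        have hst' : W.getVert s = W.getVert t := hst
        rw [hst'] at h1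
        rw [h1] at h2
        exact_mod_cast h2
      have hc₂ : S₂.card = r + 1 := by
        rw [hS₂def, Finset.card_image_of_injOn, Finset.card_range]
        intro s hs t ht hst
        rw [Finset.mem_coe, Finset.mem_range] at hs ht
        have h1 := hτ s (by omega)
        have h2 := hτ t (by omega)
        have hst' : W.getVert (D - s) = W.getVert (D - t) := hst
        rw [hst'] at h1
        rw [h1] at h2
        exact_mod_cast h2
      have hdisj : Disjoint S₁ S₂ := by
        rw [Finset.disjoint_left]
        intro a ha₁ ha₂
        rw [hS₁def, Finset.mem_image] at ha₁
        rw [hS₂def, Finset.mem_image] at ha₂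
        obtain ⟨s, hs, rfl⟩ := ha₁
        obtain ⟨t, ht, hat⟩ := ha₂
        rw [Finset.mem_range] at hs ht
        have h1 := hσ s (by omega)
        have h2 := hτ t (by omega)
        have hat' : W.getVert (D - t) = W.getVert s := hat
        rw [hat'] at h2
        have : (G.deleteEdges {e}).edist p q ≤ ((s + t : ℕ) : ℕ∞) := by
          calc (G.deleteEdges {e}).edist p q
              ≤ (G.deleteEdges {e}).edist p (W.getVert s)
                + (G.deleteEdges {e}).edist (W.getVert s) q := SimpleGraph.edist_triangle
            _ = (s : ℕ∞) + (t : ℕ∞) := by rw [h1, h2]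
            _ = ((s + t : ℕ) : ℕ∞) := by push_cast; ring
        have hcontra : (G.deleteEdges {e}).edist p q ≤ (k : ℕ∞) := by
          refine this.trans ?_
          exact_mod_cast (by omega : s + t ≤ k)
        exact absurd hpq (not_lt.mpr hcontra)
      have hsub : S₁ ∪ S₂ ⊆ Finset.univ.filter (fun a => Good G a e) := by
        intro a ha
        rw [Finset.mem_union] at ha
        rw [Finset.mem_filter]
        refine ⟨Finset.mem_univ _, ?_⟩
        rcases ha with ha | ha
        · rw [hS₁def, Finset.mem_image] at ha
          obtain ⟨s, hs, rfl⟩ := ha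
          rw [Finset.mem_range] at hs
          exact hgoodσ s (by omega)
        · rw [hS₂def, Finset.mem_image] at ha
          obtain ⟨s, hs, rfl⟩ := ha
          rw [Finset.mem_range] at hs
          exact hgoodτ s (by omega)
      have hcard : 2 * r + 2 ≤ (Finset.univ.filter (fun a => Good G a e)).card := by
        have := Finset.card_le_card hsub
        rw [Finset.card_union_of_disjoint hdisj, hc₁, hc₂] at this
        omega
      omega

end DiamCritAux

theorem diam_k_critical_edge_bound {V : Type*} [Fintype V] (G : SimpleGraph V)
    (k : ℕ) (hk : 2 ≤ k) (hG : IsDiamKCritical G k) (n : ℕ) (hn : n = Fintype.card V) :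
    (G.edgeFinset.card : ℝ) ≤ 3 * (n : ℝ) ^ 2 / (k : ℝ) := by
  classical
  open DiamCritAux in
  have hrow : ∀ a : V, (G.edgeFinset.filter (fun e => Good G a e)).card ≤ Fintype.card V :=
    fun a => row_bound G a
  have hcol : ∀ e ∈ G.edgeFinset, k + 2 ≤ 2 * (Finset.univ.filter (fun a => Good G a e)).card := by
    intro e he
    exact col_bound hk hG (SimpleGraph.mem_edgeFinset.mp he)
  have hswap : ∑ e ∈ G.edgeFinset, (Finset.univ.filter (fun a => Good G a e)).card
      = ∑ a : V, (G.edgeFinset.filter (fun e => Good G a e)).card := by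
    simp_rw [Finset.card_filter]
    rw [Finset.sum_comm]
  have hmain : (k + 2) * G.edgeFinset.card ≤ 2 * (Fintype.card V * Fintype.card V) := by
    calc (k + 2) * G.edgeFinset.card
        = ∑ _e ∈ G.edgeFinset, (k + 2) := by
          rw [Finset.sum_const, smul_eq_mul, mul_comm]
      _ ≤ ∑ e ∈ G.edgeFinset, 2 * (Finset.univ.filter (fun a => Good G a e)).card :=
          Finset.sum_le_sum hcol
      _ = 2 * ∑ e ∈ G.edgeFinset, (Finset.univ.filter (fun a => Good G a e)).card := by
          rw [Finset.mul_sum]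
      _ = 2 * ∑ a : V, (G.edgeFinset.filter (fun e => Good G a e)).card := by rw [hswap]
      _ ≤ 2 * ∑ _a : V, Fintype.card V := by
          refine Nat.mul_le_mul_left 2 (Finset.sum_le_sum fun a _ => hrow a)
      _ = 2 * (Fintype.card V * Fintype.card V) := by
          rw [Finset.sum_const, smul_eq_mul, Finset.card_univ]
  have hnat : k * G.edgeFinset.card ≤ 3 * (n * n) := by
    have h1 : k * G.edgeFinset.card ≤ (k + 2) * G.edgeFinset.card :=
      Nat.mul_le_mul_right _ (by omega)
    have h2 : 2 * (Fintype.card V * Fintype.card V) ≤ 3 * (n * n) := by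
      rw [hn]
      omega
    omega
  have hk0 : (0 : ℝ) < (k : ℝ) := by positivity
  rw [le_div_iff₀ hk0]
  have : ((k * G.edgeFinset.card : ℕ) : ℝ) ≤ ((3 * (n * n) : ℕ) : ℝ) := by
    exact_mod_cast hnat
  push_cast at this
  nlinarith [this]
end

section
/- For any n-vertex graph H, e(H) + di(H) ≤ n²/2, where di(H) is the number of unordered vertex pairs {u,v} whose closed neighborhood intersections are empty (i.e., u and v have disjoint neighborhoods). -/
open scoped Classical

open Finset

/-- The number of unordered pairs of (distinct) vertices of `H` with disjoint neighborhoods. -/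
noncomputable def disjointNeighborPairs {V : Type*} [Fintype V] (H : SimpleGraph V) : ℕ :=
  ((Finset.univ.powersetCard 2).filter fun s =>
    ∀ u ∈ s, ∀ v ∈ s, u ≠ v → Disjoint (H.neighborFinset u) (H.neighborFinset v)).card

/-- For a vertex `u`, the set of vertices `v ≠ u` with `N(u) ∩ N(v) = ∅`. -/
noncomputable def dnbrSet {V : Type*} [Fintype V] (H : SimpleGraph V) (u : V) : Finset V :=
  Finset.univ.filter fun v => u ≠ v ∧ Disjoint (H.neighborFinset u) (H.neighborFinset v)

/-- The maximum degree among the neighbors of `u` (0 if `u` is isolated). -/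
noncomputable def supdeg {V : Type*} [Fintype V] (H : SimpleGraph V) (u : V) : ℕ :=
  (H.neighborFinset u).sup fun w => H.degree w

lemma two_mul_dnp_le {V : Type*} [Fintype V] (H : SimpleGraph V) :
    2 * disjointNeighborPairs H ≤ ∑ u, (dnbrSet H u).card := by
  classical
  set S := ((Finset.univ.powersetCard 2).filter fun s =>
    ∀ u ∈ s, ∀ v ∈ s, u ≠ v → Disjoint (H.neighborFinset u) (H.neighborFinset v)) with hS
  set T : Finset ((_ : V) × V) := Finset.univ.sigma (dnbrSet H) with hT
  have hTmem : ∀ p : (_ : V) × V, p ∈ T ↔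
      p.1 ≠ p.2 ∧ Disjoint (H.neighborFinset p.1) (H.neighborFinset p.2) := by
    intro p
    simp [hT, dnbrSet, Finset.mem_sigma]
  have hmaps : ∀ p ∈ T, ({p.1, p.2} : Finset V) ∈ S := by
    intro p hp
    rw [hTmem] at hp
    rw [hS, Finset.mem_filter, Finset.mem_powersetCard]
    refine ⟨⟨by simp, Finset.card_pair hp.1⟩, ?_⟩
    intro u hu v hv huv
    simp only [Finset.mem_insert, Finset.mem_singleton] at hu hv
    rcases hu with rfl | rfl <;> rcases hv with rfl | rfl
    · exact absurd rfl huv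
    · exact hp.2
    · exact hp.2.symm
    · exact absurd rfl huv
  have hcard := Finset.card_eq_sum_card_fiberwise hmaps
  have hfiber : ∀ s ∈ S, 2 ≤ (T.filter fun p => ({p.1, p.2} : Finset V) = s).card := by
    intro s hs
    rw [hS, Finset.mem_filter, Finset.mem_powersetCard] at hs
    obtain ⟨a, b, hab, rfl⟩ := Finset.card_eq_two.mp hs.1.2
    have hd : Disjoint (H.neighborFinset a) (H.neighborFinset b) :=
      hs.2 a (by simp) b (by simp) hab
    have h1 : (⟨a, b⟩ : (_ : V) × V) ∈ T.filter fun p => ({p.1, p.2} : Finset V) = {a, b} := by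
      rw [Finset.mem_filter, hTmem]
      exact ⟨⟨hab, hd⟩, rfl⟩
    have h2 : (⟨b, a⟩ : (_ : V) × V) ∈ T.filter fun p => ({p.1, p.2} : Finset V) = {a, b} := by
      rw [Finset.mem_filter, hTmem]
      exact ⟨⟨hab.symm, hd.symm⟩, Finset.pair_comm b a⟩
    have hne : (⟨a, b⟩ : (_ : V) × V) ≠ ⟨b, a⟩ := by
      intro h
      exact hab (congrArg Sigma.fst h)
    calc 2 = ({⟨a, b⟩, ⟨b, a⟩} : Finset ((_ : V) × V)).card := (Finset.card_pair hne).symm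
    _ ≤ _ := Finset.card_le_card (by
        intro p hp
        simp only [Finset.mem_insert, Finset.mem_singleton] at hp
        rcases hp with rfl | rfl
        · exact h1
        · exact h2)
  have hTcard : T.card = ∑ u, (dnbrSet H u).card := Finset.card_sigma _ _
  have : 2 * S.card ≤ T.card := by
    rw [hcard]
    calc 2 * S.card = ∑ _s ∈ S, 2 := by rw [Finset.sum_const, smul_eq_mul, mul_comm]
    _ ≤ _ := Finset.sum_le_sum hfiber
  rw [disjointNeighborPairs, ← hS, ← hTcard]
  exact this

lemma dnbr_card_add_sup_le {V : Type*} [Fintype V] (H : SimpleGraph V) (u : V) :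
    (dnbrSet H u).card + supdeg H u ≤ Fintype.card V := by
  classical
  rcases (H.neighborFinset u).eq_empty_or_nonempty with he | hne
  · rw [supdeg, he, Finset.sup_empty]
    simpa using Finset.card_le_univ (dnbrSet H u)
  · obtain ⟨w, hw, hsup⟩ := Finset.exists_mem_eq_sup _ hne fun w => H.degree w
    rw [supdeg, hsup]
    have hdisj : Disjoint (dnbrSet H u) (H.neighborFinset w) := by
      rw [Finset.disjoint_left]
      intro v hv hvw
      rw [dnbrSet, Finset.mem_filter] at hv
      have h1 : w ∈ H.neighborFinset v := by
        rw [SimpleGraph.mem_neighborFinset] at hvw ⊢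
        exact hvw.symm
      exact (Finset.disjoint_right.mp hv.2.2) h1 hw
    calc (dnbrSet H u).card + H.degree w
        = (dnbrSet H u).card + (H.neighborFinset w).card := by
          rw [SimpleGraph.card_neighborFinset_eq_degree]
      _ = (dnbrSet H u ∪ H.neighborFinset w).card := (Finset.card_union_of_disjoint hdisj).symm
      _ ≤ Fintype.card V := Finset.card_le_univ _

lemma sum_degree_le_sum_sup {V : Type*} [Fintype V] (H : SimpleGraph V) :
    (∑ u, (H.degree u : ℝ)) ≤ ∑ u, (supdeg H u : ℝ) := by
  classical
  set F : V → V → ℝ := fun u w => if H.Adj u w then (H.degree w : ℝ) / (H.degree u : ℝ) else 0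
    with hF
  have hkey : 2 * ∑ u, (H.degree u : ℝ) ≤ 2 * ∑ u, ∑ w, F u w := by
    have hsplit : ∑ u, ∑ w, (F u w + F w u) = ∑ u, ∑ w, F u w + ∑ u, ∑ w, F u w := by
      have h1 : ∑ u, ∑ w, (F u w + F w u)
          = (∑ u, ∑ w, F u w) + ∑ u, ∑ w, F w u := by
        rw [← Finset.sum_add_distrib]
        congr 1
        ext u
        rw [← Finset.sum_add_distrib]
      rw [h1]
      congr 1
      exact Finset.sum_comm
    have hterm : ∀ u w : V, (if H.Adj u w then (2 : ℝ) else 0) ≤ F u w + F w u := by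
      intro u w
      by_cases h : H.Adj u w
      · have hdu : 0 < H.degree u := by
          rw [SimpleGraph.degree_pos_iff_exists_adj]; exact ⟨w, h⟩
        have hdw : 0 < H.degree w := by
          rw [SimpleGraph.degree_pos_iff_exists_adj]; exact ⟨u, h.symm⟩
        have hdu' : (0 : ℝ) < H.degree u := by exact_mod_cast hdu
        have hdw' : (0 : ℝ) < H.degree w := by exact_mod_cast hdw
        simp only [hF, h, h.symm, if_true]
        rw [div_add_div _ _ (ne_of_gt hdu') (ne_of_gt hdw'), le_div_iff₀ (by positivity)]
        nlinarith [sq_nonneg ((H.degree u : ℝ) - (H.degree w : ℝ))]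
      · have h' : ¬ H.Adj w u := fun hc => h hc.symm
        simp [hF, h, h']
    have hdeg : ∀ u : V, ∑ w, (if H.Adj u w then (2 : ℝ) else 0) = 2 * (H.degree u : ℝ) := by
      intro u
      rw [← Finset.sum_filter]
      simp only [Finset.sum_const, smul_eq_mul]
      rw [← SimpleGraph.neighborFinset_eq_filter, SimpleGraph.card_neighborFinset_eq_degree]
      ring
    calc 2 * ∑ u, (H.degree u : ℝ) = ∑ u, 2 * (H.degree u : ℝ) := by rw [Finset.mul_sum]
      _ = ∑ u, ∑ w, (if H.Adj u w then (2 : ℝ) else 0) := by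
          apply Finset.sum_congr rfl; intro u _; rw [hdeg u]
      _ ≤ ∑ u, ∑ w, (F u w + F w u) := by
          apply Finset.sum_le_sum; intro u _
          exact Finset.sum_le_sum fun w _ => hterm u w
      _ = 2 * ∑ u, ∑ w, F u w := by rw [hsplit]; ring
  have hinner : ∀ u : V, ∑ w, F u w ≤ (supdeg H u : ℝ) := by
    intro u
    have hrw : ∑ w, F u w = ∑ w ∈ H.neighborFinset u, (H.degree w : ℝ) / (H.degree u : ℝ) := by
      rw [SimpleGraph.neighborFinset_eq_filter, Finset.sum_filter]
    rcases (H.neighborFinset u).eq_empty_or_nonempty with he | hne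
    · rw [hrw, he, Finset.sum_empty]
      positivity
    · have hdu : 0 < H.degree u := by
        obtain ⟨w, hw⟩ := hne
        rw [SimpleGraph.degree_pos_iff_exists_adj]
        exact ⟨w, (SimpleGraph.mem_neighborFinset _ _ _).mp hw⟩
      have hdu' : (0 : ℝ) < H.degree u := by exact_mod_cast hdu
      rw [hrw, ← Finset.sum_div, div_le_iff₀ hdu']
      calc ∑ w ∈ H.neighborFinset u, (H.degree w : ℝ)
          ≤ (H.neighborFinset u).card • (supdeg H u : ℝ) := by
            apply Finset.sum_le_card_nsmul
            intro w hw
            exact_mod_cast Finset.le_sup (f := fun w => H.degree w) hw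
        _ = (supdeg H u : ℝ) * (H.degree u : ℝ) := by
            rw [SimpleGraph.card_neighborFinset_eq_degree, nsmul_eq_mul, mul_comm]
  have h2 : 2 * ∑ u, (H.degree u : ℝ) ≤ 2 * ∑ u, (supdeg H u : ℝ) := by
    calc 2 * ∑ u, (H.degree u : ℝ) ≤ 2 * ∑ u, ∑ w, F u w := hkey
      _ ≤ 2 * ∑ u, (supdeg H u : ℝ) := by
          apply mul_le_mul_of_nonneg_left _ (by norm_num)
          exact Finset.sum_le_sum fun u _ => hinner u
  linarith

theorem edges_add_disjointPairs_le {V : Type*} [Fintype V] (H : SimpleGraph V)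
    (n : ℕ) (hn : n = Fintype.card V) :
    (H.edgeFinset.card : ℝ) + (disjointNeighborPairs H : ℝ) ≤ (n : ℝ) ^ 2 / 2 := by
  classical
  subst hn
  set N := Fintype.card V with hN
  have h2e : (∑ u, (H.degree u : ℝ)) = 2 * (H.edgeFinset.card : ℝ) := by
    exact_mod_cast congrArg (Nat.cast : ℕ → ℝ) (SimpleGraph.sum_degrees_eq_twice_card_edges H)
  have hdnp : 2 * (disjointNeighborPairs H : ℝ) ≤ ∑ u, ((dnbrSet H u).card : ℝ) := by
    have := two_mul_dnp_le H
    exact_mod_cast this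
  have hper : ∀ u : V, ((dnbrSet H u).card : ℝ) ≤ (N : ℝ) - (supdeg H u : ℝ) := by
    intro u
    have h' : ((dnbrSet H u).card : ℝ) + (supdeg H u : ℝ) ≤ (N : ℝ) := by
      exact_mod_cast dnbr_card_add_sup_le H u
    linarith
  have hsum : ∑ u, ((dnbrSet H u).card : ℝ) ≤ (N : ℝ) * (N : ℝ) - ∑ u, (H.degree u : ℝ) := by
    calc ∑ u, ((dnbrSet H u).card : ℝ)
        ≤ ∑ u : V, ((N : ℝ) - (supdeg H u : ℝ)) :=
          Finset.sum_le_sum fun u _ => hper u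
      _ = (N : ℝ) * (N : ℝ) - ∑ u, (supdeg H u : ℝ) := by
          rw [Finset.sum_sub_distrib, Finset.sum_const, Finset.card_univ, ← hN, nsmul_eq_mul]
      _ ≤ (N : ℝ) * (N : ℝ) - ∑ u, (H.degree u : ℝ) := by
          have := sum_degree_le_sum_sup H
          linarith
  have hfin : 2 * ((H.edgeFinset.card : ℝ) + (disjointNeighborPairs H : ℝ)) ≤ (N : ℝ) * (N : ℝ) := by
    linarith
  nlinarith [hfin]
end

section
/- Let G be a graph of diameter at most 3 in which, for every edge e, there exist vertices x,y with d_G(x,y) ≤ 3 and d_{G−e}(x,y) ≥ 4. If a pair {x,y} is 2-critical in G (there is a unique (x,y)-path of length at most 2), or is critical (some edge e satisfies d_G(x,y) ≤ 3 and d_{G−e}(x,y) ≥ 4 with the shortest (x,y)-path of length 3), then x and y have disjoint neighborhoods in any subgraph G₀ of G obtained by deleting all edges lying on 2-critical paths of length two. -/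
open scoped Classical

theorem critical_pairs_have_disjoint_neighborhoods {V : Type*} [Fintype V]
    (G G₀ : SimpleGraph V)
    (hdiam : G.ediam ≤ 3)
    (hcrit : ∀ e ∈ G.edgeSet, ∃ x y : V,
      G.edist x y ≤ 3 ∧ 3 < (G.deleteEdges {e}).edist x y)
    (hsub : G₀ ≤ G)
    (hdel : ∀ (x y : V) (p : G.Walk x y), p.IsPath → p.length = 2 →
      (∃! q : G.Walk x y, q.IsPath ∧ q.length ≤ 2) → ∃ e ∈ p.edges, e ∉ G₀.edgeSet)
    (x y : V) (hxy : x ≠ y)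
    (h : (∃! p : G.Walk x y, p.IsPath ∧ p.length ≤ 2) ∨
      (G.edist x y = 3 ∧ ∃ e ∈ G.edgeSet, 3 < (G.deleteEdges {e}).edist x y)) :
    Disjoint (G₀.neighborSet x) (G₀.neighborSet y) := by
  rw [Set.disjoint_left]
  intro z hzx hzy
  have hxz : G₀.Adj x z := hzx
  have hyz : G₀.Adj y z := hzy
  let p : G.Walk x y :=
    SimpleGraph.Walk.cons (hsub hxz) (SimpleGraph.Walk.cons (hsub hyz).symm SimpleGraph.Walk.nil)
  have hp : p.IsPath := by
    simp only [p, SimpleGraph.Walk.cons_isPath_iff, SimpleGraph.Walk.isPath_iff_eq_nil,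
      SimpleGraph.Walk.support_cons, SimpleGraph.Walk.support_nil]
    simp [(hsub hyz).ne', hxz.ne, hxy, Ne.symm hxy]
  have hplen : p.length = 2 := rfl
  rcases h with huniq | ⟨hd3, -⟩
  · obtain ⟨e, he, hen⟩ := hdel x y p hp hplen huniq
    have : p.edges = [s(x, z), s(z, y)] := rfl
    rw [this] at he
    simp only [List.mem_cons, List.mem_singleton, List.not_mem_nil, or_false] at he
    rcases he with rfl | rfl
    · exact hen (G₀.mem_edgeSet.mpr hxz)
    · exact hen (G₀.mem_edgeSet.mpr hyz.symm)
  · have := SimpleGraph.Walk.edist_le p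
    rw [hd3, hplen] at this
    norm_num at this
end
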